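/- Let A be a unital C*-algebra, x ∈ A, and φ a state on A such that φ(x) = λ with |λ| = ‖x‖ = 1. If furthermore φ(x*x) = φ(x*)φ(x), then λ lies in the left spectrum of x, i.e., x - λ·1 is not left invertible. -/
import Mathlib


/-- A state on a unital C*-algebra, presented as a unital positive linear functional. -/
def IsState {A : Type*} [NormedRing A] [StarRing A] [NormedAlgebra ℂ A]
    (φ : A →ₗ[ℂ] ℂ) : Prop :=
  φ 1 = 1 ∧ ∀ a : A, ∃ r : ℝ, 0 ≤ r ∧ φ (star a * a) = (r : ℂ)

theorem mem_left_spectrum_of_state_attaining_unimodular_norm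
    {A : Type*} [NormedRing A] [StarRing A] [CStarRing A] [NormedAlgebra ℂ A]
    [StarModule ℂ A] [CompleteSpace A]
    (x : A) (φ : A →ₗ[ℂ] ℂ) (hφ : IsState φ) (lam : ℂ)
    (hval : φ x = lam) (hlam : ‖lam‖ = 1) (hx : ‖x‖ = 1)
    (hmult : φ (star x * x) = φ (star x) * φ x) :
    ¬ ∃ y : A, y * (x - lam • 1) = 1 := by
  rintro ⟨y, hy⟩
  obtain ⟨h1, hpos⟩ := hφ
  have hre : ∀ a : A, (φ (star a * a)).im = 0 ∧ 0 ≤ (φ (star a * a)).re := by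
    intro a
    obtain ⟨r, hr, h⟩ := hpos a
    rw [h]; simp [hr]
  -- hermitian symmetry
  have hherm : ∀ a b : A, φ (star b * a) = starRingEnd ℂ (φ (star a * b)) := by
    intro a b
    set u := φ (star a * b) with hu
    set v := φ (star b * a) with hv
    have e1 : star (a + b) * (a + b)
        = star a * a + (star a * b + (star b * a + star b * b)) := by
      rw [star_add]; simp only [add_mul, mul_add]; abel
    have e2 : star (a + (Complex.I) • b) * (a + (Complex.I) • b)
        = star a * a + (Complex.I • (star a * b) +
          ((-Complex.I) • (star b * a) + star b * b)) := by
      rw [star_add, star_smul]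
      simp only [add_mul, mul_add, smul_mul_assoc, mul_smul_comm, smul_smul,
        Complex.star_def, Complex.conj_I]
      match_scalars <;> simp [Complex.I_sq] <;> ring
    have h1' := (hre (a + b)).1
    have h2' := (hre (a + (Complex.I) • b)).1
    rw [e1] at h1'
    rw [e2] at h2'
    simp only [map_add, map_smul, smul_eq_mul] at h1' h2'
    have ia := (hre a).1
    have ib := (hre b).1
    rw [← hu, ← hv] at h1' h2'
    simp only [Complex.add_im, Complex.mul_im, Complex.I_re, Complex.I_im,
      Complex.neg_re, Complex.neg_im, ia, ib] at h1' h2'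
    apply Complex.ext <;> simp [Complex.conj_re, Complex.conj_im] <;> linarith
  set z := x - lam • (1 : A) with hz
  -- φ (star z * z) = 0
  have hstar1 : φ (star x) = starRingEnd ℂ lam := by
    have := hherm (1 : A) x
    simpa [h1, hval] using this
  have hzz : φ (star z * z) = 0 := by
    have e : star z * z = star x * x - lam • star x - (starRingEnd ℂ lam) • x
        + (starRingEnd ℂ lam * lam) • (1 : A) := by
      rw [hz, star_sub, star_smul, star_one]
      simp only [sub_mul, mul_sub, smul_mul_assoc, mul_smul_comm, smul_smul,
        one_mul, mul_one, Complex.star_def]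
      module
    rw [e]
    simp only [map_add, map_sub, map_smul, smul_eq_mul, hmult, hval, hstar1, h1]
    ring
  -- key: φ (star a * z) = 0 for all a
  have hkey : ∀ a : A, φ (star a * a) = 0 → ∀ b : A, φ (star b * a) = 0 := by
    intro a ha b
    set c := φ (star b * a) with hc
    by_contra hcne
    have hcsq : 0 < Complex.normSq c := by
      simpa [Complex.normSq_pos] using hcne
    have key : ∀ s : ℝ, 0 ≤ (φ (star b * b)).re - 2 * s * Complex.normSq c := by
      intro s
      set t : ℂ := -(s : ℂ) * starRingEnd ℂ c with ht
      have e : star (b + t • a) * (b + t • a)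
          = star b * b + (t • (star b * a) +
            ((starRingEnd ℂ t) • (star a * b) + (starRingEnd ℂ t * t) • (star a * a))) := by
        rw [star_add, star_smul]
        simp only [add_mul, mul_add, smul_mul_assoc, mul_smul_comm, smul_smul,
          Complex.star_def]
        module
      have hpos' := (hre (b + t • a)).2
      rw [e] at hpos'
      simp only [map_add, map_smul, smul_eq_mul, ha, mul_zero, add_zero, ← hc] at hpos'
      have hab : φ (star a * b) = starRingEnd ℂ c := by
        rw [hc]; exact hherm b a
      rw [hab] at hpos'
      have hconj : starRingEnd ℂ t = -(s : ℂ) * c := by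
        rw [ht]; simp [map_mul, Complex.conj_conj, Complex.conj_ofReal]
      have : t * c + starRingEnd ℂ t * starRingEnd ℂ c
          = (-(2 * s * Complex.normSq c) : ℝ) := by
        rw [ht, hconj]
        have h1' : starRingEnd ℂ c * c = (Complex.normSq c : ℂ) := by
          rw [mul_comm]; exact Complex.mul_conj c
        have h2' : c * starRingEnd ℂ c = (Complex.normSq c : ℂ) := Complex.mul_conj c
        calc -(s:ℂ) * starRingEnd ℂ c * c + -(s:ℂ) * c * starRingEnd ℂ c
            = -(s:ℂ) * (starRingEnd ℂ c * c) + -(s:ℂ) * (c * starRingEnd ℂ c) := by ring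
          _ = (-(2 * s * Complex.normSq c) : ℝ) := by rw [h1', h2']; push_cast; ring
      rw [this] at hpos'
      simpa using hpos'
    have h2 := key (((φ (star b * b)).re + 1) / (2 * Complex.normSq c))
    have : (φ (star b * b)).re - 2 * (((φ (star b * b)).re + 1) / (2 * Complex.normSq c)) * Complex.normSq c
        = -1 := by
      field_simp
      ring
    rw [this] at h2
    linarith
  have hyz : φ (y * z) = 0 := by
    have := hkey z hzz (star y)
    simpa [star_star] using this
  rw [hy, h1] at hyz
  exact one_ne_zero hyz
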